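/- For every n ≥ 9, with S = {0, 1, 3} ⊆ ℤ/nℤ, the Cayley poset P(ℤ/nℤ, S) is a Cayley representation of ℤ/nℤ: every order automorphism of P(ℤ/nℤ, S) is translation by an element of ℤ/nℤ. -/

import Mathlib

variable {G : Type*}

/-- The order relation of the (additive) Cayley poset `P(G,S)`: the underlying set is
the disjoint union of two copies of `G` (`Sum.inl g` written `g`, `Sum.inr h` written
`h'`), with `g < h'` iff `h - g ∈ S`, and no other distinct elements comparable. -/
def addCayleyLE [AddGroup G] (S : Set G) : G ⊕ G → G ⊕ G → Prop
  | Sum.inl g, Sum.inl h => g = h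
  | Sum.inl g, Sum.inr h => h - g ∈ S
  | Sum.inr _, Sum.inl _ => False
  | Sum.inr g, Sum.inr h => g = h

/-- The additive Cayley poset `P(G,S)` as a type synonym for `G ⊕ G`. -/
def AddCayleyPoset (G : Type*) [AddGroup G] (S : Set G) : Type _ := G ⊕ G

instance [AddGroup G] (S : Set G) : PartialOrder (AddCayleyPoset G S) where
  le x y := addCayleyLE S x y
  le_refl x := by cases x <;> exact rfl
  le_trans x y z hxy hyz := by
    cases x <;> cases y <;> cases z <;> simp_all [addCayleyLE]
  le_antisymm x y hxy hyx := by
    cases x <;> cases y <;> simp_all [addCayleyLE] <;> rfl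

/-- The translation `L(g)` on `P(G,S)`: `h ↦ g + h` on minimal points and
`h' ↦ (g + h)'` on maximal points. -/
def addCayleyL [AddGroup G] (g : G) : G ⊕ G → G ⊕ G
  | Sum.inl h => Sum.inl (g + h)
  | Sum.inr h => Sum.inr (g + h)

/-- `P(G,S)` is a Cayley representation of the additive group `G` if every order
automorphism of the Cayley poset `P(G,S)` is a translation. -/
def IsAddCayleyRep (G : Type*) [AddGroup G] (S : Set G) : Prop :=
  ∀ φ : AddCayleyPoset G S ≃o AddCayleyPoset G S,
    ∃ g : G, ∀ p : AddCayleyPoset G S, φ p = addCayleyL g p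



private def tv : Fin 6 → ℤ
  | ⟨0,_⟩ => 1 | ⟨1,_⟩ => -1 | ⟨2,_⟩ => 2 | ⟨3,_⟩ => -2 | ⟨4,_⟩ => 3 | ⟨5,_⟩ => -3

private def fv : Fin 6 → ℤ
  | ⟨0,_⟩ => 2 | ⟨1,_⟩ => 3 | ⟨2,_⟩ => -3 | ⟨3,_⟩ => -1 | ⟨4,_⟩ => -2 | ⟨5,_⟩ => 1

private def Rstep (i j k : Fin 6) : Prop :=
  tv i + tv j = fv k ∨ (tv i + tv j = 6 ∧ fv k = -3) ∨ (tv i + tv j = -6 ∧ fv k = 3)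

private instance (i j k : Fin 6) : Decidable (Rstep i j k) := by unfold Rstep; infer_instance

private theorem force : ∀ i0 i1 i2 i3 i4 i5 : Fin 6,
    Rstep i0 i1 i2 → Rstep i1 i2 i3 → Rstep i2 i3 i4 → Rstep i3 i4 i5 → i0 = 0 := by
  decide

private theorem pairlem : ∀ k : Fin 6, ∀ u v : ℤ,
    (u = 2 ∧ v = 1 ∨ u = 3 ∧ v = -1 ∨ u = -2 ∧ v = 3 ∨ u = 1 ∧ v = -3 ∨ u = -3 ∧ v = 2 ∨ u = -1 ∧ v = -2) →
    tv k = v → u = fv k := by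
  intro k u v h hv
  rcases h with ⟨rfl,rfl⟩|⟨rfl,rfl⟩|⟨rfl,rfl⟩|⟨rfl,rfl⟩|⟨rfl,rfl⟩|⟨rfl,rfl⟩ <;>
    revert k hv <;> decide

private theorem tvbound : ∀ k : Fin 6, -3 ≤ tv k ∧ tv k ≤ 3 := by decide

private theorem main_ab (n : ℕ) (hn : 9 ≤ n) (a b : ZMod n → ZMod n)
    (hainj : Function.Injective a)
    (hiff : ∀ g h : ZMod n, h - g ∈ ({0,1,3} : Set (ZMod n)) ↔
      b h - a g ∈ ({0,1,3} : Set (ZMod n))) :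
    (∀ g, a g = a 0 + g) ∧ (∀ h, b h = a 0 + h) := by
  haveI : NeZero n := ⟨by omega⟩
  have h9 : (9:ℤ) ≤ (n:ℤ) := by exact_mod_cast hn
  -- basic cast tools
  have hdvd : ∀ d : ℤ, -9 ≤ d → d ≤ 9 → ((d : ZMod n) = 0) → d = -9 ∨ d = 0 ∨ d = 9 := by
    intro d h1 h2 h3
    obtain ⟨q, hq⟩ := (ZMod.intCast_zmod_eq_zero_iff_dvd d n).mp h3
    rcases lt_trichotomy q 0 with h|h|h
    · have hq1 : q ≤ -1 := by omega
      have e1 : (n:ℤ) * q ≤ (n:ℤ) * (-1) :=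
        mul_le_mul_of_nonneg_left hq1 (by omega)
      left; linarith
    · subst h; omega
    · have hq1 : 1 ≤ q := by omega
      have e1 : (n:ℤ) * 1 ≤ (n:ℤ) * q :=
        mul_le_mul_of_nonneg_left hq1 (by omega)
      right; right; linarith
  have hzero : ∀ d : ℤ, -9 < d → d < 9 → ((d : ZMod n) = 0) → d = 0 := by
    intro d h1 h2 h3
    rcases hdvd d (by omega) (by omega) h3 with h|h|h <;> omega
  have casteq : ∀ j k : ℤ, -9 < j - k → j - k < 9 → ((j : ZMod n) = (k : ZMod n)) → j = k := by
    intro j k h1 h2 h3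
    have : ((j - k : ℤ) : ZMod n) = 0 := by push_cast; rw [h3]; ring
    have := hzero _ h1 h2 this; omega
  have hSmem : ∀ x : ZMod n, x ∈ ({0,1,3} : Set (ZMod n)) ↔ x = 0 ∨ x = 1 ∨ x = 3 := by
    intro x; simp [Set.mem_insert_iff]
  -- the permutation case-bash
  have perm : ∀ p q r : ZMod n, (p = 0 ∨ p = 1 ∨ p = 3) → (q = 0 ∨ q = 1 ∨ q = 3) →
      (r = 0 ∨ r = 1 ∨ r = 3) → p ≠ q → q ≠ r → p ≠ r →
      ∃ u v : ℤ,
        (u = 2 ∧ v = 1 ∨ u = 3 ∧ v = -1 ∨ u = -2 ∧ v = 3 ∨ u = 1 ∧ v = -3 ∨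
          u = -3 ∧ v = 2 ∨ u = -1 ∧ v = -2) ∧
        p - q = (u : ZMod n) ∧ q - r = (v : ZMod n) := by
    intro p q r hp hq hr hpq hqr hpr
    rcases hp with rfl|rfl|rfl <;> rcases hq with rfl|rfl|rfl <;> rcases hr with rfl|rfl|rfl <;>
      first
        | exact absurd rfl (by assumption)
        | (refine ⟨2, 1, ?_, ?_, ?_⟩ <;> first | (norm_num; done) | (push_cast; norm_num; done))
        | (refine ⟨3, -1, ?_, ?_, ?_⟩ <;> first | (norm_num; done) | (push_cast; norm_num; done))
        | (refine ⟨-2, 3, ?_, ?_, ?_⟩ <;> first | (norm_num; done) | (push_cast; norm_num; done))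
        | (refine ⟨1, -3, ?_, ?_, ?_⟩ <;> first | (norm_num; done) | (push_cast; norm_num; done))
        | (refine ⟨-3, 2, ?_, ?_, ?_⟩ <;> first | (norm_num; done) | (push_cast; norm_num; done))
        | (refine ⟨-1, -2, ?_, ?_, ?_⟩ <;> first | (norm_num; done) | (push_cast; norm_num; done))
  -- the triple constraint
  have key3 : ∀ h : ZMod n, ∃ u v : ℤ,
      (u = 2 ∧ v = 1 ∨ u = 3 ∧ v = -1 ∨ u = -2 ∧ v = 3 ∨ u = 1 ∧ v = -3 ∨
        u = -3 ∧ v = 2 ∨ u = -1 ∧ v = -2) ∧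
      a (h-1) - a (h-3) = (u : ZMod n) ∧ a h - a (h-1) = (v : ZMod n) := by
    intro h
    have m0 : b h - a h = 0 ∨ b h - a h = 1 ∨ b h - a h = 3 :=
      (hSmem _).mp ((hiff h h).mp ((hSmem _).mpr (Or.inl (sub_self h))))
    have m1 : b h - a (h-1) = 0 ∨ b h - a (h-1) = 1 ∨ b h - a (h-1) = 3 :=
      (hSmem _).mp ((hiff (h-1) h).mp ((hSmem _).mpr (Or.inr (Or.inl (by ring)))))
    have m3 : b h - a (h-3) = 0 ∨ b h - a (h-3) = 1 ∨ b h - a (h-3) = 3 :=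
      (hSmem _).mp ((hiff (h-3) h).mp ((hSmem _).mpr (Or.inr (Or.inr (by ring)))))
    have dist : ∀ x y : ZMod n, x ≠ y → ((x - y : ZMod n) ≠ 0) → True := fun _ _ _ _ => trivial
    have d31 : b h - a (h-3) ≠ b h - a (h-1) := by
      intro e
      have e2 : a (h-3) = a (h-1) := by linear_combination -e
      have e3 : h - 3 = h - 1 := hainj e2
      have e4 : ((-2 : ℤ) : ZMod n) = 0 := by push_cast; linear_combination e3
      have := hzero (-2) (by norm_num) (by norm_num) e4; omega
    have d10 : b h - a (h-1) ≠ b h - a h := by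
      intro e
      have e2 : a (h-1) = a h := by linear_combination -e
      have e3 : h - 1 = h := hainj e2
      have e4 : ((-1 : ℤ) : ZMod n) = 0 := by push_cast; linear_combination e3
      have := hzero (-1) (by norm_num) (by norm_num) e4; omega
    have d30 : b h - a (h-3) ≠ b h - a h := by
      intro e
      have e2 : a (h-3) = a h := by linear_combination -e
      have e3 : h - 3 = h := hainj e2
      have e4 : ((-3 : ℤ) : ZMod n) = 0 := by push_cast; linear_combination e3
      have := hzero (-3) (by norm_num) (by norm_num) e4; omega
    obtain ⟨u, v, hl, h1, h2⟩ := perm _ _ _ m3 m1 m0 d31 d10 d30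
    exact ⟨u, v, hl, by linear_combination h1, by linear_combination h2⟩
  -- letters
  have hletter : ∀ g : ZMod n, ∃ k : Fin 6, a (g+1) - a g = ((tv k : ℤ) : ZMod n) := by
    intro g
    obtain ⟨u, v, hl, h1, h2⟩ := key3 (g+1)
    rw [show g+1-1 = g from by ring] at h2
    rcases hl with ⟨rfl,rfl⟩|⟨rfl,rfl⟩|⟨rfl,rfl⟩|⟨rfl,rfl⟩|⟨rfl,rfl⟩|⟨rfl,rfl⟩
    · exact ⟨⟨0, by norm_num⟩, h2⟩
    · exact ⟨⟨1, by norm_num⟩, h2⟩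
    · exact ⟨⟨4, by norm_num⟩, h2⟩
    · exact ⟨⟨5, by norm_num⟩, h2⟩
    · exact ⟨⟨2, by norm_num⟩, h2⟩
    · exact ⟨⟨3, by norm_num⟩, h2⟩
  choose L hL using hletter
  -- the step relation holds along the orbit
  have hstep : ∀ g : ZMod n, Rstep (L g) (L (g+1)) (L (g+2)) := by
    intro g
    obtain ⟨u, v, hl, h1, h2⟩ := key3 (g+3)
    rw [show g+3-1 = g+2 from by ring, show g+3-3 = g from by ring] at h1
    rw [show g+3-1 = g+2 from by ring] at h2
    have hL1 : a (g+2) - a (g+1) = ((tv (L (g+1)) : ℤ) : ZMod n) := by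
      have := hL (g+1); rwa [show g+1+1 = g+2 from by ring] at this
    have hL2 : a (g+3) - a (g+2) = ((tv (L (g+2)) : ℤ) : ZMod n) := by
      have := hL (g+2); rwa [show g+2+1 = g+3 from by ring] at this
    have hub : -3 ≤ u ∧ u ≤ 3 ∧ -3 ≤ v ∧ v ≤ 3 := by
      rcases hl with ⟨rfl,rfl⟩|⟨rfl,rfl⟩|⟨rfl,rfl⟩|⟨rfl,rfl⟩|⟨rfl,rfl⟩|⟨rfl,rfl⟩ <;> norm_num
    have hsum : ((tv (L g) + tv (L (g+1)) : ℤ) : ZMod n) = (u : ZMod n) := by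
      push_cast
      linear_combination h1 - hL1 - hL g
    have hveq : tv (L (g+2)) = v := by
      apply casteq
      · have := (tvbound (L (g+2))).1; omega
      · have := (tvbound (L (g+2))).2; omega
      · rw [← hL2, h2]
    have hufv : u = fv (L (g+2)) := pairlem _ _ _ hl hveq
    have hb1 := tvbound (L g); have hb2 := tvbound (L (g+1))
    rcases hdvd (tv (L g) + tv (L (g+1)) - u) (by omega) (by omega)
        (by push_cast; rw [sub_eq_zero]; push_cast at hsum; exact hsum) with h|h|h
    · right; right; constructor
      · omega
      · omega
    · left; omega
    · right; left; constructor
      · omega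
      · omega
  -- all letters are ⟨0⟩, i.e. all steps are +1
  have hone : ∀ g : ZMod n, L g = ⟨0, by norm_num⟩ := by
    intro g
    have s1 := hstep (g+1)
    rw [show g+1+1 = g+2 from by ring, show g+1+2 = g+3 from by ring] at s1
    have s2 := hstep (g+2)
    rw [show g+2+1 = g+3 from by ring, show g+2+2 = g+4 from by ring] at s2
    have s3 := hstep (g+3)
    rw [show g+3+1 = g+4 from by ring, show g+3+2 = g+5 from by ring] at s3
    exact force (L g) (L (g+1)) (L (g+2)) (L (g+3)) (L (g+4)) (L (g+5)) (hstep g) s1 s2 s3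
  have t1 : ∀ g : ZMod n, a (g+1) = a g + 1 := by
    intro g
    have := hL g
    rw [hone g] at this
    have htv : tv ⟨0, by norm_num⟩ = 1 := rfl
    rw [htv] at this
    push_cast at this
    linear_combination this
  -- b = a
  have hba : ∀ g : ZMod n, b g = a g := by
    have key : ∀ g : ZMod n, b (g+1) = a (g+1) := by
      intro g
      have m0 : b (g+1) - a (g+1) = 0 ∨ b (g+1) - a (g+1) = 1 ∨ b (g+1) - a (g+1) = 3 :=
        (hSmem _).mp ((hiff (g+1) (g+1)).mp ((hSmem _).mpr (Or.inl (sub_self _))))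
      have m1 : b (g+1) - a g = 0 ∨ b (g+1) - a g = 1 ∨ b (g+1) - a g = 3 :=
        (hSmem _).mp ((hiff g (g+1)).mp ((hSmem _).mpr (Or.inr (Or.inl (by ring)))))
      have ht := t1 g
      rcases m0 with h|h|h
      · linear_combination h
      · exfalso
        rcases m1 with e|e|e
        · have : ((2:ℤ) : ZMod n) = 0 := by push_cast; linear_combination e - h - ht
          have := hzero 2 (by norm_num) (by norm_num) this; omega
        · have : ((1:ℤ) : ZMod n) = 0 := by push_cast; linear_combination e - h - ht
          have := hzero 1 (by norm_num) (by norm_num) this; omega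
        · have : ((-1:ℤ) : ZMod n) = 0 := by push_cast; linear_combination e - h - ht
          have := hzero (-1) (by norm_num) (by norm_num) this; omega
      · exfalso
        rcases m1 with e|e|e
        · have : ((4:ℤ) : ZMod n) = 0 := by push_cast; linear_combination e - h - ht
          have := hzero 4 (by norm_num) (by norm_num) this; omega
        · have : ((3:ℤ) : ZMod n) = 0 := by push_cast; linear_combination e - h - ht
          have := hzero 3 (by norm_num) (by norm_num) this; omega
        · have : ((1:ℤ) : ZMod n) = 0 := by push_cast; linear_combination e - h - ht
          have := hzero 1 (by norm_num) (by norm_num) this; omega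
    intro g
    have := key (g-1)
    rwa [show g-1+1 = g from by ring] at this
  -- a is translation
  have hnat : ∀ k : ℕ, a ((k : ZMod n)) = a 0 + (k : ZMod n) := by
    intro k
    induction k with
    | zero => simp
    | succ k ih =>
      have : ((k+1 : ℕ) : ZMod n) = (k : ZMod n) + 1 := by push_cast; ring
      rw [this, t1, ih]; ring
  have haff : ∀ g : ZMod n, a g = a 0 + g := by
    intro g
    have := hnat g.val
    rwa [ZMod.natCast_rightInverse g] at this
  exact ⟨haff, fun h => by rw [hba h, haff h]⟩

section CayleyHelpers

variable [AddGroup G] (S : Set G)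

/-- minimal-copy point of the Cayley poset -/
private def mk1 (g : G) : AddCayleyPoset G S := Sum.inl g
/-- maximal-copy point of the Cayley poset -/
private def mk2 (g : G) : AddCayleyPoset G S := Sum.inr g

private lemma le12 (g h : G) : mk1 S g ≤ mk2 S h ↔ h - g ∈ S := Iff.rfl
private lemma le11 (g h : G) : mk1 S g ≤ mk1 S h ↔ g = h := Iff.rfl
private lemma not_le21 (g h : G) : ¬ mk2 S g ≤ mk1 S h := fun h => h
private lemma mk1_ne_mk2 (g h : G) : mk1 S g ≠ mk2 S h := fun h => Sum.inl_ne_inr h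

variable {S}

private lemma exists_ab (h0S : (0:G) ∈ S)
    (φ : AddCayleyPoset G S ≃o AddCayleyPoset G S) : ∃ a b : G → G,
    (∀ g, φ (mk1 S g) = mk1 S (a g)) ∧ (∀ h, φ (mk2 S h) = mk2 S (b h)) := by
  have hmin : ∀ g : G, ∃ a : G, φ (mk1 S g) = mk1 S a := by
    intro g
    rcases hx : (φ (mk1 S g) : G ⊕ G) with a | h
    · exact ⟨a, rfl⟩
    · exfalso
      have h1 : mk1 S h ≤ mk2 S h := (le12 S h h).mpr (by simpa using h0S)
      have h2 := φ.symm.monotone h1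
      have h3 : φ.symm (mk2 S h) = mk1 S g := by
        rw [show (mk2 S h) = φ (mk1 S g) from hx.symm]; exact φ.symm_apply_apply _
      rw [h3] at h2
      rcases hy : (φ.symm (mk1 S h) : G ⊕ G) with c | c
      · rw [show (φ.symm (mk1 S h) : G ⊕ G) = mk1 S c from hy] at h2
        have hcg : c = g := (le11 S c g).mp h2
        subst hcg
        have : mk1 S h = mk2 S h := φ.symm.injective (hy.trans h3.symm)
        exact mk1_ne_mk2 S h h this
      · rw [show (φ.symm (mk1 S h) : G ⊕ G) = mk2 S c from hy] at h2
        exact not_le21 S c g h2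
  have hmax : ∀ h : G, ∃ c : G, φ (mk2 S h) = mk2 S c := by
    intro h
    rcases hx : (φ (mk2 S h) : G ⊕ G) with c | c
    · exfalso
      obtain ⟨d, hd⟩ := hmin h
      have h1 : mk1 S h ≤ mk2 S h := (le12 S h h).mpr (by simpa using h0S)
      have h2 := φ.monotone h1
      rw [hd, show (φ (mk2 S h) : G ⊕ G) = mk1 S c from hx] at h2
      have : d = c := (le11 S d c).mp h2
      subst this
      have : mk1 S h = mk2 S h := φ.injective (hd.trans hx.symm)
      exact mk1_ne_mk2 S h h this
    · exact ⟨c, rfl⟩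
  exact ⟨fun g => (hmin g).choose, fun h => (hmax h).choose,
    fun g => (hmin g).choose_spec, fun h => (hmax h).choose_spec⟩

end CayleyHelpers

/-- For every `n ≥ 9`, with `S = {0, 1, 3} ⊆ ℤ/nℤ`, the Cayley poset
`P(ℤ/nℤ, S)` is a Cayley representation of `ℤ/nℤ`. -/
theorem zmod_cayleyRep (n : ℕ) (hn : 9 ≤ n) :
    IsAddCayleyRep (ZMod n) ({0, 1, 3} : Set (ZMod n)) := by
  set S : Set (ZMod n) := {0, 1, 3} with hS
  intro φ
  have h0S : (0 : ZMod n) ∈ S := Set.mem_insert _ _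
  obtain ⟨a, b, ha, hb⟩ := exists_ab h0S φ
  have hainj : Function.Injective a := by
    intro g g' e
    have : φ (mk1 S g) = φ (mk1 S g') := by rw [ha, ha, e]
    have := φ.injective this
    exact Sum.inl.inj this
  have hiff : ∀ g h : ZMod n, h - g ∈ S ↔ b h - a g ∈ S := by
    intro g h
    have e1 : (h - g ∈ S) ↔ mk1 S g ≤ mk2 S h := (le12 S g h).symm
    have e2 : (mk1 S g ≤ mk2 S h) ↔ φ (mk1 S g) ≤ φ (mk2 S h) :=
      (OrderIso.le_iff_le φ).symm
    rw [ha, hb] at e2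
    exact e1.trans (e2.trans (le12 S (a g) (b h)))
  obtain ⟨haff, hbff⟩ := main_ab n hn a b hainj hiff
  refine ⟨a 0, ?_⟩
  have key : ∀ q : ZMod n ⊕ ZMod n, φ q = addCayleyL (a 0) q := by
    intro q
    rcases q with g | h
    · show φ (mk1 S g) = _
      rw [ha g, haff g]; rfl
    · show φ (mk2 S h) = _
      rw [hb h, hbff h]; rfl
  exact fun p => key p
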